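/- arXiv:2009.10602 — 3 statements merged into one kernel-verified Lean document; each statement's English description precedes it below -/
import Mathlib

section
/- Let G be a finite group, p a prime, F a field of characteristic p, and H a subgroup of G. If every simple FG-module has dimension strictly less than p, then every simple FH-module has dimension strictly less than p. -/
open MonoidAlgebra Finsupp

section Aux

variable {F : Type} [Field F] {G : Type} [Group G] (H : Subgroup G)

/-- The `F`-linear projection `F[G] → F[H]` restricting a finitely supported
function to the subgroup. -/
noncomputable def projH (a : MonoidAlgebra F G) : MonoidAlgebra F H :=
  MonoidAlgebra.ofCoeff (a.coeff.subtypeDomain (· ∈ H))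

@[simp] lemma projH_apply (a : MonoidAlgebra F G) (h : H) :
    (projH H a).coeff h = a.coeff (h : G) := rfl

lemma projH_zero : projH H (0 : MonoidAlgebra F G) = 0 := rfl

lemma projH_add (a b : MonoidAlgebra F G) :
    projH H (a + b) = projH H a + projH H b :=
  congrArg MonoidAlgebra.ofCoeff Finsupp.subtypeDomain_add

lemma projH_one : projH H (1 : MonoidAlgebra F G) = 1 := by
  classical
  ext h
  show (Finsupp.single (1 : G) (1 : F)) (h : G) = (Finsupp.single (1 : H) (1 : F)) h
  rw [Finsupp.single_apply, Finsupp.single_apply]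
  by_cases hh : (1 : H) = h
  · rw [if_pos hh, if_pos (show (1 : G) = (h : G) by rw [← hh]; rfl)]
  · rw [if_neg hh, if_neg (show ¬(1 : G) = (h : G) from fun e => hh (Subtype.ext e))]

lemma projH_mul_mapDomain (a : MonoidAlgebra F G) (b : MonoidAlgebra F H) :
    projH H (a * MonoidAlgebra.mapDomainAlgHom F F H.subtype b) = projH H a * b := by
  induction b using MonoidAlgebra.induction_linear with
  | zero => simp [projH_zero]
  | add u v hu hv =>
      rw [map_add, mul_add, projH_add, hu, hv, mul_add]
  | single h y =>
      have hmap : (MonoidAlgebra.mapDomainAlgHom F F H.subtype)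
          (MonoidAlgebra.single h y) = MonoidAlgebra.single (h : G) y := by
        simp [MonoidAlgebra.mapDomainAlgHom_apply, MonoidAlgebra.mapDomain_single]
      rw [hmap]
      ext h'
      show (a * MonoidAlgebra.single (h : G) y).coeff ((h' : H) : G)
          = (projH H a * MonoidAlgebra.single h y).coeff h'
      rw [MonoidAlgebra.coeff_mul_single_apply, MonoidAlgebra.coeff_mul_single_apply]
      have : ((h' * h⁻¹ : H) : G) = (h' : G) * (h : G)⁻¹ := by push_cast; rfl
      rw [projH_apply, this]

end Aux

/-- Let `G` be a finite group, `p` a prime, `F` a field of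
characteristic `p`, and `H ≤ G`.  If every simple `FG`-module has dimension
strictly less than `p`, then every simple `FH`-module has dimension strictly
less than `p`. -/
theorem simple_modules_small_of_subgroup
    (p : ℕ) (hp : p.Prime)
    (F : Type) [Field F] [CharP F p]
    (G : Type) [Group G] [Finite G] (H : Subgroup G)
    (hdim : ∀ (V : Type) [AddCommGroup V] [Module (MonoidAlgebra F G) V]
      [Module F V] [IsScalarTower F (MonoidAlgebra F G) V],
      IsSimpleModule (MonoidAlgebra F G) V →
        FiniteDimensional F V ∧ Module.finrank F V < p) :
    ∀ (W : Type) [AddCommGroup W] [Module (MonoidAlgebra F H) W]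
      [Module F W] [IsScalarTower F (MonoidAlgebra F H) W],
      IsSimpleModule (MonoidAlgebra F H) W →
        FiniteDimensional F W ∧ Module.finrank F W < p := by
  intro W _ _ _ _ hW
  classical
  haveI := hW
  haveI : Nontrivial W := IsSimpleModule.nontrivial (MonoidAlgebra F H) W
  set A := MonoidAlgebra F G with hA
  set B := MonoidAlgebra F H with hB
  let f : B →ₐ[F] A := MonoidAlgebra.mapDomainAlgHom F F H.subtype
  obtain ⟨w, hw⟩ := exists_ne (0 : W)
  let φW : B →ₗ[B] W := LinearMap.toSpanSingleton B W w
  have hsurj : Function.Surjective φW :=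
    IsSimpleModule.toSpanSingleton_surjective B hw
  set I : Submodule B B := LinearMap.ker φW with hI
  have hcoI : IsCoatom I :=
    (isSimpleModule_iff_isCoatom (m := I)).mp
      (IsSimpleModule.congr (φW.quotKerEquivOfSurjective hsurj))
  have h1I : (1 : B) ∉ I := by
    intro h1
    have : φW 1 = 0 := h1
    rw [LinearMap.toSpanSingleton_apply, one_smul] at this
    exact hw this
  set J : Submodule A A := Submodule.span A (f '' (I : Set B)) with hJ
  -- `1 ∉ J` via the projection `projH`
  have h1J : (1 : A) ∉ J := by
    intro h1
    have key : ∀ x ∈ J, ∀ a : A, projH H (a * x) ∈ I := by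
      intro x hx
      refine Submodule.span_induction (p := fun x _ => ∀ a : A, projH H (a * x) ∈ I)
        ?_ ?_ ?_ ?_ hx
      · rintro x ⟨b, hb, rfl⟩ a
        rw [projH_mul_mapDomain]
        exact I.smul_mem (projH H a) hb
      · intro a; rw [mul_zero, projH_zero]; exact I.zero_mem
      · intro x y _ _ hx hy a
        rw [mul_add, projH_add]
        exact I.add_mem (hx a) (hy a)
      · intro c x _ hx a
        rw [smul_eq_mul, ← mul_assoc]
        exact hx (a * c)
    have := key 1 h1 1
    rw [mul_one, projH_one] at this
    exact h1I this
  have hJtop : J ≠ ⊤ := fun h => h1J (h ▸ Submodule.mem_top)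
  -- existence of a maximal submodule above `J`
  haveI : IsCoatomic (Submodule A A) := by
    apply CompleteLattice.coatomic_of_top_compact
    have htop : (⊤ : Submodule A A) = Submodule.span A {1} := by
      refine le_antisymm (fun x _ => ?_) le_top
      rw [Submodule.mem_span_singleton]
      exact ⟨x, by rw [smul_eq_mul, mul_one]⟩
    exact htop ▸ Submodule.singleton_span_isCompactElement 1
  obtain ⟨M, hM, hJM⟩ := (eq_top_or_exists_le_coatom J).resolve_left hJtop
  have hS : IsSimpleModule A (A ⧸ M) := (isSimpleModule_iff_isCoatom (m := M)).mpr hM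
  obtain ⟨hfinS, hltS⟩ := hdim (A ⧸ M) hS
  -- the preimage of `M` under `f` is a submodule of `B` equal to `I`
  let K : Submodule B B :=
    { carrier := {b : B | f b ∈ M}
      add_mem' := fun {x y} hx hy => by
        show f (x + y) ∈ M
        rw [map_add]; exact M.add_mem hx hy
      zero_mem' := by show f 0 ∈ M; rw [map_zero]; exact M.zero_mem
      smul_mem' := fun c x hx => by
        show f (c • x) ∈ M
        rw [smul_eq_mul, map_mul]
        exact M.smul_mem (f c) hx }
  have hIK : I ≤ K := fun b hb => hJM (Submodule.subset_span ⟨b, hb, rfl⟩)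
  have hKtop : K ≠ ⊤ := by
    intro h
    have h1 : f 1 ∈ M := by
      have : (1 : B) ∈ K := h ▸ Submodule.mem_top
      exact this
    rw [map_one] at h1
    refine hM.1 (Submodule.eq_top_iff'.mpr fun a => ?_)
    simpa using M.smul_mem a h1
  have hKI : K = I := by
    rcases eq_or_lt_of_le hIK with h | h
    · exact h.symm
    · exact absurd (hcoI.2 K h) hKtop
  -- build the `F`-linear embedding `W ↪ A ⧸ M`
  let τ : B →ₗ[F] (A ⧸ M) := (M.mkQ.restrictScalars F).comp f.toLinearMap
  have hτker : ∀ b : B, τ b = 0 ↔ f b ∈ M := by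
    intro b
    show Submodule.Quotient.mk (f b) = 0 ↔ _
    exact Submodule.Quotient.mk_eq_zero M
  let I' : Submodule F B := I.restrictScalars F
  have hle : I' ≤ LinearMap.ker τ := by
    intro b hb
    have hbI : b ∈ I := hb
    have : f b ∈ M := hIK hbI
    exact LinearMap.mem_ker.mpr ((hτker b).mpr this)
  let g1 : (B ⧸ I') →ₗ[F] (A ⧸ M) := I'.liftQ τ hle
  have hg1 : Function.Injective g1 := by
    rw [← LinearMap.ker_eq_bot]
    refine Submodule.ker_liftQ_eq_bot I' τ hle ?_
    intro b hb
    have : f b ∈ M := (hτker b).mp (LinearMap.mem_ker.mp hb)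
    have : b ∈ K := this
    rw [hKI] at this
    exact this
  let e2 : (B ⧸ I') ≃ₗ[F] (B ⧸ I) := Submodule.Quotient.restrictScalarsEquiv F I
  let e1 : (B ⧸ I) ≃ₗ[B] W := φW.quotKerEquivOfSurjective hsurj
  let e1F : (B ⧸ I) ≃ₗ[F] W := e1.restrictScalars F
  let emb : W →ₗ[F] (A ⧸ M) :=
    g1 ∘ₗ (e2.symm.toLinearMap ∘ₗ e1F.symm.toLinearMap)
  have hinj : Function.Injective emb :=
    hg1.comp (e2.symm.injective.comp e1F.symm.injective)
  haveI : FiniteDimensional F W := FiniteDimensional.of_injective emb hinj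
  exact ⟨this, lt_of_le_of_lt (LinearMap.finrank_le_finrank_of_injective hinj) hltS⟩
end

section
/- Let G be a finite group, p a prime, and P a Sylow p-subgroup of G. Suppose that O_p(G) = 1 and that for every nontrivial subgroup V of P, the normalizer N_G(V) has a normal Sylow p-subgroup. Then N_G(V) ≤ N_G(P) for every nontrivial subgroup V of P. -/
/-- `pRadical p G` is `O_p(G)`, the largest normal `p`-subgroup of `G`. -/
def pRadical (p : ℕ) (G : Type*) [Group G] : Subgroup G :=
  ⨆ (N : Subgroup G) (_ : N.Normal) (_ : IsPGroup p N), N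

section Aux

variable {p : ℕ} {G : Type*} [Group G]

/-- Normalizer growth in finite `p`-groups, relative version. -/
lemma aux_lt_normalizer_inf [Finite G] (hp : p.Prime) {H K : Subgroup G}
    (hK : IsPGroup p K) (hHK : H ≤ K) (hlt : H < K) : H < Subgroup.normalizer (H : Set G) ⊓ K := by
  haveI : Fact p.Prime := ⟨hp⟩
  haveI : Group.IsNilpotent ↥K := hK.isNilpotent
  have hnc : NormalizerCondition ↥K := normalizerCondition_of_isNilpotent
  have hne : H.subgroupOf K < ⊤ := by
    obtain ⟨x, hxK, hxH⟩ := SetLike.exists_of_lt hlt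
    refine lt_of_le_of_ne le_top (fun h => hxH ?_)
    have : (⟨x, hxK⟩ : K) ∈ H.subgroupOf K := by rw [h]; trivial
    exact this
  obtain ⟨y, hy, hyH⟩ := SetLike.exists_of_lt (hnc _ hne)
  have hy' : ∀ b : K, b ∈ H.subgroupOf K ↔ y * b * y⁻¹ ∈ H.subgroupOf K :=
    fun b => Subgroup.mem_normalizer_iff.mp hy b
  refine lt_of_le_of_ne (le_inf Subgroup.le_normalizer hHK) (fun h => ?_)
  apply hyH
  have hyG : (y : G) ∈ Subgroup.normalizer (H : Set G) ⊓ K := by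
    refine ⟨Subgroup.mem_normalizer_iff.mpr (fun g => ?_), y.2⟩
    constructor
    · intro hg
      have := (hy' ⟨g, hHK hg⟩).mp hg
      exact this
    · intro hg
      have hgK : g ∈ K := by
        have : g = (y : G)⁻¹ * ((y : G) * g * (y : G)⁻¹) * (y : G) := by group
        rw [this]
        exact mul_mem (mul_mem (inv_mem y.2) (hHK hg)) y.2
      have : (⟨g, hgK⟩ : K) ∈ H.subgroupOf K := by
        apply (hy' ⟨g, hgK⟩).mpr
        exact hg
      exact this
  rw [← h] at hyG
  exact hyG

/-- A normal Sylow subgroup contains every `p`-subgroup. -/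
lemma aux_le_of_normal [Finite G] (hp : p.Prime) (Q : Sylow p G)
    (hQ : (Q : Subgroup G).Normal) {S : Subgroup G} (hS : IsPGroup p S) : S ≤ Q := by
  haveI : Fact p.Prime := ⟨hp⟩
  obtain ⟨R, hR⟩ := hS.exists_le_sylow
  haveI := Sylow.unique_of_normal Q hQ
  rwa [Subsingleton.elim R Q] at hR

lemma aux_card_lt [Finite G] {H K : Subgroup G} (h : H < K) : Nat.card H < Nat.card K := by
  refine lt_of_le_of_ne (Subgroup.card_le_of_le h.le) (fun hc => h.ne ?_)
  exact Subgroup.eq_of_le_of_card_ge h.le hc.ge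

end Aux

/-- Let `G` be a finite group, `p` a prime and `P` a Sylow
`p`-subgroup of `G`.  Suppose `O_p(G) = 1` and that for every nontrivial subgroup
`V ≤ P` the normalizer `N_G(V)` has a normal Sylow `p`-subgroup.  Then
`N_G(V) ≤ N_G(P)` for every nontrivial subgroup `V ≤ P`. -/
theorem normalizer_le_normalizer_sylow
    (p : ℕ) (hp : p.Prime)
    (G : Type) [Group G] [Finite G] (P : Sylow p G)
    (hO : pRadical p G = ⊥)
    (hN : ∀ V : Subgroup G, V ≤ (P : Subgroup G) → V ≠ ⊥ →
      ∃ Q : Sylow p (Subgroup.normalizer (V : Set G)), (Q : Subgroup (Subgroup.normalizer (V : Set G))).Normal) :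
    ∀ V : Subgroup G, V ≤ (P : Subgroup G) → V ≠ ⊥ →
      Subgroup.normalizer (V : Set G) ≤ Subgroup.normalizer ((P : Subgroup G) : Set G) := by
  haveI : Fact p.Prime := ⟨hp⟩
  suffices H : ∀ n, ∀ V : Subgroup G, V ≤ (P : Subgroup G) → V ≠ ⊥ →
      Nat.card (P : Subgroup G) - Nat.card V = n →
      Subgroup.normalizer (V : Set G) ≤ Subgroup.normalizer ((P : Subgroup G) : Set G) by
    exact fun V h1 h2 => H _ V h1 h2 rfl
  intro n
  induction n using Nat.strong_induction_on with
  | _ n ih =>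
  intro V hVP hVbot hcard
  rcases eq_or_lt_of_le hVP with hVeq | hVlt
  · rw [hVeq]
  -- V < P
  set N := Subgroup.normalizer (V : Set G) with hNdef
  obtain ⟨Q, hQ⟩ := hN V hVP hVbot
  set Q' := (Q : Subgroup ↥N).map N.subtype with hQ'def
  have hQ'p : IsPGroup p Q' := Q.isPGroup'.map N.subtype
  have hQ'N : Q' ≤ N := Subgroup.map_subtype_le _
  set W := Subgroup.normalizer (V : Set G) ⊓ (P : Subgroup G) with hWdef
  have hWP : W ≤ (P : Subgroup G) := inf_le_right
  have hVltW : V < W := aux_lt_normalizer_inf hp P.isPGroup' hVP hVlt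
  have hWbot : W ≠ ⊥ := by
    intro h
    exact hVbot (le_bot_iff.mp (h ▸ hVltW.le))
  -- W is a p-subgroup of N, hence W ≤ Q'
  have hsub_le : ∀ S : Subgroup G, S ≤ (P : Subgroup G) → S ≤ N → S ≤ Q' := by
    intro S hSP hSN
    have hSp : IsPGroup p (S.subgroupOf N) :=
      ((P.isPGroup'.to_le hSP).comap_of_injective N.subtype N.subtype_injective).to_le
        (by intro x hx; exact hx)
    have := aux_le_of_normal hp Q hQ hSp
    have hmap := Subgroup.map_le_map_iff_of_injective (f := N.subtype)
        (Subgroup.subtype_injective N) |>.mpr this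
    rwa [Subgroup.subgroupOf_map_subtype, inf_eq_left.mpr hSN] at hmap
  have hWQ' : W ≤ Q' := hsub_le W hWP inf_le_left
  -- N_G(W) ≤ N_G(P) by induction
  have hcardVP : Nat.card V < Nat.card (P : Subgroup G) := aux_card_lt hVlt
  have hcardVW : Nat.card V < Nat.card W := aux_card_lt hVltW
  have hNW : Subgroup.normalizer (W : Set G) ≤ Subgroup.normalizer ((P : Subgroup G) : Set G) := by
    refine ih (Nat.card (P : Subgroup G) - Nat.card W) ?_ W hWP hWbot rfl
    omega
  -- Q' = W
  have hQ'W : Q' = W := by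
    by_contra hne
    have hWltQ' : W < Q' := lt_of_le_of_ne hWQ' (Ne.symm hne)
    have hgrow : W < Subgroup.normalizer (W : Set G) ⊓ Q' := aux_lt_normalizer_inf hp hQ'p hWQ' hWltQ'
    -- but W.normalizer ⊓ Q' ≤ W
    have hR : Subgroup.normalizer (W : Set G) ⊓ Q' ≤ W := by
      have hRle : Subgroup.normalizer (W : Set G) ⊓ Q' ≤ Subgroup.normalizer ((P : Subgroup G) : Set G) :=
        le_trans inf_le_left hNW
      have hRp : IsPGroup p (Subgroup.normalizer (W : Set G) ⊓ Q' : Subgroup G) := hQ'p.to_le inf_le_right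
      -- P is a normal Sylow subgroup of its normalizer
      have hRP : Subgroup.normalizer (W : Set G) ⊓ Q' ≤ (P : Subgroup G) := by
        have hPS : (Subgroup.normalizer ((P : Subgroup G) : Set G) ⊓ Q' ⊓ Subgroup.normalizer (W : Set G) ≤ _) := le_refl _
        set M := Subgroup.normalizer ((P : Subgroup G) : Set G)
        have hPM : (P : Subgroup G) ≤ M := Subgroup.le_normalizer
        have hsyl : ((P.subtype hPM : Subgroup ↥M)).Normal := by
          rw [Sylow.coe_subtype]
          infer_instance
        have hRMp : IsPGroup p ((Subgroup.normalizer (W : Set G) ⊓ Q').subgroupOf M) :=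
          (hRp.comap_of_injective M.subtype M.subtype_injective).to_le
            (by intro x hx; exact hx)
        have := aux_le_of_normal hp (P.subtype hPM) hsyl hRMp
        rw [Sylow.coe_subtype] at this
        have hmap := Subgroup.map_le_map_iff_of_injective (f := M.subtype)
            (Subgroup.subtype_injective M) |>.mpr this
        rw [Subgroup.subgroupOf_map_subtype, Subgroup.subgroupOf_map_subtype,
          inf_eq_left.mpr hRle, inf_eq_left.mpr hPM] at hmap
        exact hmap
      exact le_inf (le_trans inf_le_right hQ'N) hRP
    obtain ⟨x, hx1, hx2⟩ := SetLike.exists_of_lt hgrow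
    exact hx2 (hR hx1)
  -- N ≤ N_G(Q') = N_G(W) ≤ N_G(P)
  have hNQ' : N ≤ Subgroup.normalizer (Q' : Set G) := by
    intro g hg
    rw [Subgroup.mem_normalizer_iff]
    intro x
    constructor
    · rintro ⟨q, hq, rfl⟩
      exact ⟨(⟨g, hg⟩ : N) * q * (⟨g, hg⟩ : N)⁻¹, hQ.conj_mem q hq ⟨g, hg⟩, rfl⟩
    · rintro hgx
      obtain ⟨q, hq, hqe⟩ := hgx
      have : x = ((⟨g, hg⟩ : N)⁻¹ * q * ⟨g, hg⟩ : N) := by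
        have : (q : G) = g * x * g⁻¹ := hqe
        simp only [Subgroup.coe_mul, Subgroup.coe_inv, this]
        group
      rw [this]
      exact ⟨(⟨g, hg⟩ : N)⁻¹ * q * ⟨g, hg⟩, by
        have := hQ.conj_mem q hq (⟨g, hg⟩ : N)⁻¹
        simp at this; exact this, rfl⟩
  calc Subgroup.normalizer (V : Set G) ≤ Subgroup.normalizer (Q' : Set G) := hNQ'
    _ = Subgroup.normalizer (W : Set G) := by rw [hQ'W]
    _ ≤ Subgroup.normalizer ((P : Subgroup G) : Set G) := hNW
end

section
/- Let G be a finite group, p a prime, and P a Sylow p-subgroup of G. Suppose that O_p(G) = 1 and that for every nontrivial subgroup V of P, the normalizer N_G(V) has a normal Sylow p-subgroup. Then P ∩ P^g = 1 for every g ∈ G with g ∉ N_G(P); that is, distinct conjugates of P intersect trivially. -/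
open Subgroup

section Aux

variable {p : ℕ} [Fact p.Prime] {G : Type} [Group G] [Finite G]

private lemma card_lt_of_lt' {V W : Subgroup G} (h : V < W) :
    Nat.card V < Nat.card W := by
  rw [← SetLike.coe_sort_coe, ← SetLike.coe_sort_coe, Nat.card_coe_set_eq,
    Nat.card_coe_set_eq]
  exact Set.ncard_strictMono (SetLike.coe_ssubset_coe.mpr h)

/-- Any `p`-subgroup is contained in a normal Sylow `p`-subgroup. -/
private lemma le_sylow_of_normal (Q : Sylow p G) (hQ : (Q : Subgroup G).Normal)
    {K : Subgroup G} (hK : IsPGroup p K) : K ≤ Q := by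
  obtain ⟨S, hS⟩ := hK.exists_le_sylow
  haveI := Sylow.unique_of_normal Q hQ
  rwa [Subsingleton.elim S Q] at hS

/-- Normalizer growth in a Sylow subgroup: if `V` is a proper subgroup of a
Sylow `p`-subgroup `P`, then `V < P ⊓ N_G(V)`. -/
private lemma lt_inf_normalizer (P : Sylow p G) {V : Subgroup G}
    (hVP : V ≤ (P : Subgroup G)) (hVne : V ≠ (P : Subgroup G)) :
    V < (P : Subgroup G) ⊓ (Subgroup.normalizer (V : Set G)) := by
  haveI : Group.IsNilpotent ↥(P : Subgroup G) := P.isPGroup'.isNilpotent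
  have hnc := normalizerCondition_of_isNilpotent (G := ↥(P : Subgroup G))
  have hVt : V.subgroupOf (P : Subgroup G) < ⊤ := by
    refine lt_top_iff_ne_top.mpr fun h => hVne (le_antisymm hVP ?_)
    exact subgroupOf_eq_top.mp h
  have h2 := hnc _ hVt
  have hmap : Subgroup.map (P : Subgroup G).subtype
      (Subgroup.normalizer ((V.subgroupOf (P : Subgroup G)) : Set ↥(P : Subgroup G))) ≤ (P : Subgroup G) ⊓ (Subgroup.normalizer (V : Set G)) := by
    rintro x ⟨y, hy, rfl⟩
    refine ⟨y.2, fun h => ?_⟩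
    have hy : ∀ b : ↥(P : Subgroup G), b ∈ V.subgroupOf (P : Subgroup G) ↔
        y * b * y⁻¹ ∈ V.subgroupOf (P : Subgroup G) :=
      Subgroup.mem_normalizer_iff.mp hy
    show h ∈ V ↔ (y : G) * h * (y : G)⁻¹ ∈ V
    constructor
    · intro hh
      exact mem_subgroupOf.mp ((hy ⟨h, hVP hh⟩).mp (mem_subgroupOf.mpr hh))
    · intro hh
      have hhP : h ∈ (P : Subgroup G) := by
        have : (y : G)⁻¹ * ((y : G) * h * (y : G)⁻¹) * (y : G) ∈ (P : Subgroup G) := by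
          exact mul_mem (mul_mem (inv_mem y.2) (hVP hh)) y.2
        simpa [mul_assoc] using this
      exact mem_subgroupOf.mp ((hy ⟨h, hhP⟩).mpr (mem_subgroupOf.mpr hh))
  refine lt_of_lt_of_le ?_ hmap
  have hlt : Subgroup.map (P : Subgroup G).subtype (V.subgroupOf (P : Subgroup G)) <
      Subgroup.map (P : Subgroup G).subtype (Subgroup.normalizer ((V.subgroupOf (P : Subgroup G)) : Set ↥(P : Subgroup G))) := by
    refine lt_of_le_of_ne (Subgroup.map_mono h2.le) fun he => h2.ne ?_
    exact Subgroup.map_injective (P : Subgroup G).subtype_injective he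
  rwa [subgroupOf_map_subtype, inf_eq_left.mpr hVP] at hlt

/-- Key induction: `P` is the unique Sylow `p`-subgroup containing any
nontrivial subgroup `V` of `P`. -/
private lemma key (P : Sylow p G)
    (hN : ∀ V : Subgroup G, V ≤ (P : Subgroup G) → V ≠ ⊥ →
      ∃ Q : Sylow p (Subgroup.normalizer (V : Set G)), (Q : Subgroup (Subgroup.normalizer (V : Set G))).Normal) :
    ∀ n : ℕ, ∀ V : Subgroup G,
      Nat.card (P : Subgroup G) ≤ Nat.card V + n → V ≤ (P : Subgroup G) → V ≠ ⊥ →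
      ∀ S : Sylow p G, V ≤ (S : Subgroup G) → S = P := by
  intro n
  induction n with
  | zero =>
    intro V hcard hVP hVbot S hVS
    have hVP' : V = (P : Subgroup G) := by
      by_contra h
      have := card_lt_of_lt' (lt_of_le_of_ne hVP h)
      omega
    exact Sylow.ext (P.is_maximal' S.isPGroup' (hVP' ▸ hVS))
  | succ n ih =>
    intro V hcard hVP hVbot S hVS
    by_cases hVne : V = (P : Subgroup G)
    · subst hVne
      exact Sylow.ext (P.is_maximal' S.isPGroup' hVS)
    obtain ⟨Q, hQ⟩ := hN V hVP hVbot
    set Q' : Subgroup G := Subgroup.map (Subgroup.normalizer (V : Set G)).subtype (Q : Subgroup ↥(Subgroup.normalizer (V : Set G)))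
      with hQ'def
    have hQ'p : IsPGroup p Q' := Q.isPGroup'.map (Subgroup.normalizer (V : Set G)).subtype
    -- A = P ⊓ (Subgroup.normalizer (V : Set G))
    set A : Subgroup G := (P : Subgroup G) ⊓ (Subgroup.normalizer (V : Set G))
    have hVA : V < A := lt_inf_normalizer P hVP hVne
    have hAN : A ≤ (Subgroup.normalizer (V : Set G)) := inf_le_right
    have hAp : IsPGroup p A := P.isPGroup'.to_le inf_le_left
    have hAQ' : A ≤ Q' := by
      have h1 : IsPGroup p (A.subgroupOf (Subgroup.normalizer (V : Set G))) :=
        hAp.of_equiv (subgroupOfEquivOfLe hAN).symm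
      have h2 : A.subgroupOf (Subgroup.normalizer (V : Set G)) ≤ (Q : Subgroup ↥(Subgroup.normalizer (V : Set G))) := le_sylow_of_normal Q hQ h1
      have := Subgroup.map_mono (f := (Subgroup.normalizer (V : Set G)).subtype) h2
      rwa [subgroupOf_map_subtype, inf_eq_left.mpr hAN] at this
    obtain ⟨T, hT⟩ := hQ'p.exists_le_sylow
    have hcardA : Nat.card V < Nat.card A := card_lt_of_lt' hVA
    have hTP : T = P := by
      refine ih A (by omega) inf_le_left ?_ T (hAQ'.trans hT)
      exact fun h => hVbot (le_bot_iff.mp (h ▸ hVA.le))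
    have hQ'P : Q' ≤ (P : Subgroup G) := hTP ▸ hT
    -- B = S ⊓ (Subgroup.normalizer (V : Set G))
    set B : Subgroup G := (S : Subgroup G) ⊓ (Subgroup.normalizer (V : Set G))
    have hVSne : V ≠ (S : Subgroup G) := by
      intro h
      have : (S : Subgroup G) ≤ (P : Subgroup G) := h ▸ hVP
      exact hVne (h.trans (S.is_maximal' P.isPGroup' this).symm)
    have hVB : V < B := lt_inf_normalizer S hVS hVSne
    have hBN : B ≤ (Subgroup.normalizer (V : Set G)) := inf_le_right
    have hBp : IsPGroup p B := S.isPGroup'.to_le inf_le_left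
    have hBQ' : B ≤ Q' := by
      have h1 : IsPGroup p (B.subgroupOf (Subgroup.normalizer (V : Set G))) :=
        hBp.of_equiv (subgroupOfEquivOfLe hBN).symm
      have h2 : B.subgroupOf (Subgroup.normalizer (V : Set G)) ≤ (Q : Subgroup ↥(Subgroup.normalizer (V : Set G))) := le_sylow_of_normal Q hQ h1
      have := Subgroup.map_mono (f := (Subgroup.normalizer (V : Set G)).subtype) h2
      rwa [subgroupOf_map_subtype, inf_eq_left.mpr hBN] at this
    have hcardB : Nat.card V < Nat.card B := card_lt_of_lt' hVB
    refine ih B (by omega) (hBQ'.trans hQ'P) ?_ S inf_le_left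
    exact fun h => hVbot (le_bot_iff.mp (h ▸ hVB.le))

end Aux

/-- Let `G` be a finite group, `p` a prime and `P` a Sylow
`p`-subgroup of `G`.  Suppose `O_p(G) = 1` and that for every nontrivial subgroup
`V ≤ P` the normalizer `N_G(V)` has a normal Sylow `p`-subgroup.  Then
`P ∩ P^g = 1` for every `g ∈ G` with `g ∉ N_G(P)`, where `P^g = g⁻¹Pg`. -/
theorem sylow_TI_of_normalizers
    (p : ℕ) (hp : p.Prime)
    (G : Type) [Group G] [Finite G] (P : Sylow p G)
    (hO : pRadical p G = ⊥)
    (hN : ∀ V : Subgroup G, V ≤ (P : Subgroup G) → V ≠ ⊥ →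
      ∃ Q : Sylow p (Subgroup.normalizer (V : Set G)), (Q : Subgroup (Subgroup.normalizer (V : Set G))).Normal) :
    ∀ g : G, g ∉ Subgroup.normalizer ((P : Subgroup G) : Set G) →
      (P : Subgroup G) ⊓ (Subgroup.map ((MulAut.conj g⁻¹).toMonoidHom) (P : Subgroup G)) = ⊥ := by
  haveI := Fact.mk hp
  intro g hg
  by_contra hbot
  set S : Sylow p G := g⁻¹ • P with hSdef
  have hScoe : Subgroup.map ((MulAut.conj g⁻¹).toMonoidHom) (P : Subgroup G)
      = (S : Subgroup G) := rfl
  set V : Subgroup G := (P : Subgroup G) ⊓ (S : Subgroup G) with hVdef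
  have hVbot : V ≠ ⊥ := by rwa [hScoe] at hbot
  have hSP : S = P :=
    key P hN (Nat.card (P : Subgroup G)) V (Nat.le_add_left _ _) inf_le_left hVbot S inf_le_right
  have : g⁻¹ ∈ (Subgroup.normalizer ((P : Subgroup G) : Set G)) := Sylow.smul_eq_iff_mem_normalizer.mp hSP
  exact hg ((Subgroup.normalizer ((P : Subgroup G) : Set G)).inv_mem_iff.mp this)
end
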